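/- Let m ≥ 1, let n ≥ 1, let a_0, …, a_{n−1} ∈ ℂ, let p(t) = t^n + a_{n−1}t^{n−1} + ⋯ + a_0 (so a_n = 1), and let R = ℂ[t, t^{−1}, u]/(u^m − p(t)). Then for every i ∈ ℤ one has, in the quotient Ω¹_{R/ℂ}/dR, the relation ((m+1)n + im)·[t^{n+i−1} u dt] = − Σ_{j=0}^{n−1} ((m+1)j + mi)·a_j·[t^{i+j−1} u dt], where [ω] denotes the class of ω ∈ Ω¹_{R/ℂ} modulo exact differentials. -/

import Mathlib

open Polynomial LaurentPolynomial

noncomputable section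

/-- `p(t) = tⁿ + a_{n−1}t^{n−1} + ⋯ + a₁t + a₀` as a Laurent polynomial in `t`. -/
def pPoly (n : ℕ) (a : ℕ → ℂ) : LaurentPolynomial ℂ :=
  T (n : ℤ) + ∑ j ∈ Finset.range n, LaurentPolynomial.C (a j) * T (j : ℤ)

/-- `u^m − p(t)` as a polynomial in `u` over `ℂ[t, t⁻¹]`. -/
def qPoly (m n : ℕ) (a : ℕ → ℂ) : Polynomial (LaurentPolynomial ℂ) :=
  Polynomial.X ^ m - Polynomial.C (pPoly n a)

/-- The subspace `dR ⊆ Ω¹_{R/ℂ}` of exact differentials, where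
`R = ℂ[t,t⁻¹,u]/(u^m − p(t)) = AdjoinRoot (qPoly m n a)`. -/
def exactDiffs (m n : ℕ) (a : ℕ → ℂ) :
    Submodule ℂ (KaehlerDifferential ℂ (AdjoinRoot (qPoly m n a))) :=
  LinearMap.range (KaehlerDifferential.D ℂ (AdjoinRoot (qPoly m n a))).toLinearMap

/-- The residue class of the Kähler differential `f dg` in `Ω¹_{R/ℂ}/dR`. -/
def diffClass (m n : ℕ) (a : ℕ → ℂ) (f g : AdjoinRoot (qPoly m n a)) :
    KaehlerDifferential ℂ (AdjoinRoot (qPoly m n a)) ⧸ exactDiffs m n a :=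
  Submodule.Quotient.mk (f • KaehlerDifferential.D ℂ (AdjoinRoot (qPoly m n a)) g)

set_option maxHeartbeats 1000000

namespace Aux

variable (m n : ℕ) (a : ℕ → ℂ)

abbrev R := AdjoinRoot (qPoly m n a)

def tk (k : ℤ) : R m n a := AdjoinRoot.of (qPoly m n a) (T k)

lemma tk_mul (k l : ℤ) : tk m n a k * tk m n a l = tk m n a (k + l) := by
  unfold tk; rw [← map_mul, ← T_add]

lemma tk_zero : tk m n a 0 = 1 := by
  unfold tk; rw [T_zero, map_one]

abbrev Ω := KaehlerDifferential ℂ (R m n a)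

abbrev D : Derivation ℂ (R m n a) (Ω m n a) := KaehlerDifferential.D ℂ (R m n a)

lemma D_tk (k : ℤ) :
    D m n a (tk m n a k) = (k : ℂ) • (tk m n a (k - 1) • D m n a (tk m n a 1)) := by
  induction k using Int.induction_on with
  | zero => simp [tk_zero]
  | succ k ih =>
      have h : tk m n a (k + 1) = tk m n a k * tk m n a 1 := (tk_mul m n a k 1).symm
      rw [h, Derivation.leibniz, ih]
      have hk2 : tk m n a (-1 + (k:ℤ)) * tk m n a 1 = tk m n a (k:ℤ) := by
        rw [tk_mul]; congr 1; ring
      rw [show ((k:ℤ) + 1 - 1 : ℤ) = (k:ℤ) by ring]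
      match_scalars
      ring_nf
      linear_combination (k : R m n a) * hk2
  | pred k ih =>
      have hle : D m n a (tk m n a (-(k:ℤ))) =
          tk m n a (-(k:ℤ)-1) • D m n a (tk m n a 1)
            + tk m n a 1 • D m n a (tk m n a (-(k:ℤ)-1)) := by
        rw [show tk m n a (-(k:ℤ)) = tk m n a (-(k:ℤ)-1) * tk m n a 1 by
              rw [tk_mul]; congr 1; ring,
            Derivation.leibniz]
      have E : tk m n a 1 • D m n a (tk m n a (-(k:ℤ)-1)) =
          ((-(k:ℤ) : ℤ) : ℂ) • (tk m n a (-(k:ℤ)-1) • D m n a (tk m n a 1))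
            - tk m n a (-(k:ℤ)-1) • D m n a (tk m n a 1) := by
        rw [eq_sub_iff_add_eq, add_comm, ← hle, ih]
      have E2 := congrArg (fun x => tk m n a (-1 : ℤ) • x) E
      simp only [smul_sub, smul_smul, tk_mul, smul_comm (tk m n a (-1:ℤ)) ((-(k:ℤ) : ℤ) : ℂ)] at E2
      norm_num at E2
      rw [tk_zero, one_smul] at E2
      rw [show (-(k:ℤ) - 1 - 1 : ℤ) = (-1 + (-(k:ℤ) - 1) : ℤ) by ring]
      rw [E2]
      match_scalars
      push_cast; ring

/-- `u`, the adjoined root. -/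
abbrev u : R m n a := AdjoinRoot.root (qPoly m n a)

/-- `P`, the image of `p(t)` in `R`. -/
abbrev P : R m n a := AdjoinRoot.of (qPoly m n a) (pPoly n a)

lemma u_pow : u m n a ^ m = P m n a := by
  have h : AdjoinRoot.mk (qPoly m n a) (Polynomial.X ^ m - Polynomial.C (pPoly n a)) = 0 :=
    AdjoinRoot.mk_self
  rw [map_sub, map_pow, AdjoinRoot.mk_X] at h
  have h2 : AdjoinRoot.mk (qPoly m n a) (Polynomial.C (pPoly n a))
      = AdjoinRoot.of (qPoly m n a) (pPoly n a) := rfl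
  rw [h2] at h
  exact sub_eq_zero.mp h

lemma of_C_mul (c : ℂ) (x : LaurentPolynomial ℂ) :
    AdjoinRoot.of (qPoly m n a) (LaurentPolynomial.C c * x)
      = c • AdjoinRoot.of (qPoly m n a) x := by
  rw [map_mul, LaurentPolynomial.C_eq_algebraMap, Algebra.smul_def]
  congr 1

lemma P_expand :
    P m n a = tk m n a (n : ℤ) + ∑ j ∈ Finset.range n, a j • tk m n a (j : ℤ) := by
  show AdjoinRoot.of (qPoly m n a) (pPoly n a) = _
  rw [pPoly, map_add, map_sum]
  congr 1
  exact Finset.sum_congr rfl fun j _ => of_C_mul m n a (a j) (T (j : ℤ))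

lemma D_P :
    D m n a (P m n a) = ((n : ℤ) : ℂ) • (tk m n a ((n:ℤ) - 1) • D m n a (tk m n a 1))
      + ∑ j ∈ Finset.range n,
          ((((j:ℤ)) : ℂ) * a j) • (tk m n a ((j:ℤ) - 1) • D m n a (tk m n a 1)) := by
  rw [P_expand, map_add, map_sum, D_tk]
  congr 1
  refine Finset.sum_congr rfl fun j _ => ?_
  rw [Derivation.map_smul, D_tk, smul_smul, mul_comm]

/-- `W k = t^k u dt` -/
def W (k : ℤ) : Ω m n a := (tk m n a k * u m n a) • D m n a (tk m n a 1)

lemma tk_smul_W (k l : ℤ) : tk m n a k • W m n a l = W m n a (k + l) := by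
  unfold W
  rw [smul_smul, ← mul_assoc, tk_mul]

lemma hterm (c : ℂ) (l k : ℤ) :
    (tk m n a l * u m n a) • (c • (tk m n a k • D m n a (tk m n a 1)))
      = c • W m n a (l + k) := by
  unfold W
  rw [smul_comm, smul_smul, mul_right_comm, tk_mul]

lemma keyΩ (hm : 1 ≤ m) (i : ℤ) :
    (m:ℂ) • D m n a (tk m n a i * u m n a ^ (m+1))
      = (((m:ℂ)+1)*(n:ℂ) + (i:ℂ)*(m:ℂ)) • W m n a ((n:ℤ) + i - 1)
        + ∑ j ∈ Finset.range n,
            (((((m:ℂ)+1)*(j:ℂ) + (m:ℂ)*(i:ℂ)) * a j)) • W m n a (i + (j:ℤ) - 1) := by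
  have hDu : (m:ℕ) • (u m n a ^ (m-1) • D m n a (u m n a)) = D m n a (P m n a) := by
    rw [← Derivation.leibniz_pow, u_pow]
  have hA : (m:ℂ) • (u m n a ^ m • D m n a (u m n a)) = u m n a • D m n a (P m n a) := by
    have hc : u m n a • ((m:ℕ) • (u m n a ^ (m-1) • D m n a (u m n a)))
        = (m:ℕ) • ((u m n a * u m n a ^ (m-1)) • D m n a (u m n a)) := by
      rw [smul_comm, smul_smul]
    rw [← hDu, hc, ← pow_succ', Nat.sub_add_cancel hm, Nat.cast_smul_eq_nsmul]
  calc (m:ℂ) • D m n a (tk m n a i * u m n a ^ (m+1))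
      = (m:ℂ) • (tk m n a i • ((m+1) • (u m n a ^ m • D m n a (u m n a)))
          + u m n a ^ (m+1) • ((i:ℂ) • (tk m n a (i-1) • D m n a (tk m n a 1)))) := by
        rw [Derivation.leibniz, Derivation.leibniz_pow, Nat.add_sub_cancel, D_tk]
    _ = ((m:ℂ)+1) • (tk m n a i • ((m:ℂ) • (u m n a ^ m • D m n a (u m n a))))
          + ((i:ℂ)*(m:ℂ)) • ((tk m n a (i-1) * u m n a ^ (m+1)) • D m n a (tk m n a 1)) := by
        match_scalars <;> push_cast <;> ring
    _ = ((m:ℂ)+1) • ((tk m n a i * u m n a) • D m n a (P m n a))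
          + ((i:ℂ)*(m:ℂ)) • ((P m n a * (tk m n a (i-1) * u m n a)) • D m n a (tk m n a 1)) := by
        have e2 : tk m n a (i-1) * u m n a ^ (m+1) = P m n a * (tk m n a (i-1) * u m n a) := by
          rw [pow_succ, u_pow]; ring
        rw [hA, smul_smul, e2]
    _ = ((m:ℂ)+1) • (((n:ℤ) : ℂ) • W m n a (i + ((n:ℤ) - 1))
            + ∑ j ∈ Finset.range n, (((j:ℤ) : ℂ) * a j) • W m n a (i + ((j:ℤ) - 1)))
          + ((i:ℂ)*(m:ℂ)) • (W m n a ((n:ℤ) + (i - 1))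
            + ∑ j ∈ Finset.range n, a j • W m n a ((j:ℤ) + (i - 1))) := by
        refine congrArg₂ (· + ·) ?_ ?_
        · rw [D_P, smul_add, Finset.smul_sum, hterm]
          congr 2
          exact Finset.sum_congr rfl fun j _ => hterm m n a _ _ _
        · congr 1
          rw [mul_smul, P_expand, add_smul, Finset.sum_smul]
          have h1 : (tk m n a (i-1) * u m n a) • D m n a (tk m n a 1) = W m n a (i - 1) := rfl
          rw [h1, tk_smul_W]
          refine congrArg₂ (· + ·) rfl ?_
          refine Finset.sum_congr rfl fun j _ => ?_
          rw [smul_assoc, tk_smul_W]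
    _ = (((m:ℂ)+1)*(n:ℂ) + (i:ℂ)*(m:ℂ)) • W m n a ((n:ℤ) + i - 1)
        + ∑ j ∈ Finset.range n,
            (((((m:ℂ)+1)*(j:ℂ) + (m:ℂ)*(i:ℂ)) * a j)) • W m n a (i + (j:ℤ) - 1) := by
        rw [show (i + ((n:ℤ) - 1) : ℤ) = (n:ℤ) + i - 1 by ring,
            show ((n:ℤ) + (i - 1) : ℤ) = (n:ℤ) + i - 1 by ring]
        simp only [smul_add, Finset.smul_sum, smul_smul]
        rw [add_add_add_comm, ← Finset.sum_add_distrib]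
        refine congrArg₂ (· + ·) ?_ ?_
        · match_scalars; push_cast; ring
        · refine Finset.sum_congr rfl fun j _ => ?_
          rw [show (i + ((j:ℤ) - 1) : ℤ) = i + (j:ℤ) - 1 by ring,
              show ((j:ℤ) + (i - 1) : ℤ) = i + (j:ℤ) - 1 by ring]
          match_scalars; push_cast; ring

end Aux

/-- for `m, n ≥ 1`, `p(t) = tⁿ + a_{n−1}t^{n−1} + ⋯ + a₀` and
`R = ℂ[t,t⁻¹,u]/(u^m − p(t))`, one has, for every `i ∈ ℤ`, the relation
`((m+1)n + im)·[t^{n+i−1}u dt] = −Σ_{j=0}^{n−1} ((m+1)j + mi)·a_j·[t^{i+j−1}u dt]`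
in `Ω¹_{R/ℂ}/dR`. Here `t` is the image of `T 1` and `u` is the adjoined root. -/
theorem stmt_1 (m n : ℕ) (hm : 1 ≤ m) (hn : 1 ≤ n) (a : ℕ → ℂ) :
    ∀ i : ℤ,
      ((((m : ℂ) + 1) * (n : ℂ) + (i : ℂ) * (m : ℂ)) •
          diffClass m n a
            (AdjoinRoot.of (qPoly m n a) (T ((n : ℤ) + i - 1)) * AdjoinRoot.root (qPoly m n a))
            (AdjoinRoot.of (qPoly m n a) (T 1)))
        = -∑ j ∈ Finset.range n,
            (((((m : ℂ) + 1) * (j : ℂ) + (m : ℂ) * (i : ℂ)) * a j) •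
              diffClass m n a
                (AdjoinRoot.of (qPoly m n a) (T (i + (j : ℤ) - 1)) *
                  AdjoinRoot.root (qPoly m n a))
                (AdjoinRoot.of (qPoly m n a) (T 1))) := by
  intro i
  have hkey := Aux.keyΩ m n a hm i
  have hd : ∀ k : ℤ, diffClass m n a
      (AdjoinRoot.of (qPoly m n a) (T k) * AdjoinRoot.root (qPoly m n a))
      (AdjoinRoot.of (qPoly m n a) (T 1))
      = (exactDiffs m n a).mkQ (Aux.W m n a k) := fun k => rfl
  have h2 : ((exactDiffs m n a).mkQ)
        ((m:ℂ) • Aux.D m n a (Aux.tk m n a i * Aux.u m n a ^ (m+1)))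
      = (((m:ℂ)+1)*(n:ℂ) + (i:ℂ)*(m:ℂ)) • (exactDiffs m n a).mkQ (Aux.W m n a ((n:ℤ)+i-1))
        + ∑ j ∈ Finset.range n, ((((m:ℂ)+1)*(j:ℂ) + (m:ℂ)*(i:ℂ)) * a j) •
            (exactDiffs m n a).mkQ (Aux.W m n a (i+(j:ℤ)-1)) := by
    rw [hkey, map_add, map_smul, map_sum]
    simp only [map_smul]
  have hz : ((exactDiffs m n a).mkQ)
      ((m:ℂ) • Aux.D m n a (Aux.tk m n a i * Aux.u m n a ^ (m+1))) = 0 := by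
    have hmem : ((m:ℂ) • Aux.D m n a (Aux.tk m n a i * Aux.u m n a ^ (m+1)))
        ∈ exactDiffs m n a :=
      ⟨(m:ℂ) • (Aux.tk m n a i * Aux.u m n a ^ (m+1)), by simp⟩
    rw [Submodule.mkQ_apply]
    exact (Submodule.Quotient.mk_eq_zero _).mpr hmem
  simp only [hd]
  apply eq_neg_of_add_eq_zero_left
  rw [← h2, hz]

end
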